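/- For the minimum-norm linear interpolant θ̂ = X†y with n < d and XX^T invertible, the bias term satisfies BIAS² = ‖Σ^{1/2} P⊥ θ*‖₂², where P⊥ = I_d − X^T(XX^T)^{-1}X is the orthogonal projector onto the kernel of X, Σ is the population covariance, and θ* is the true parameter. Moreover BIAS² ≤ ‖θ*‖₂² · ‖Σ − Σ̂‖ where Σ̂ = (1/n)X^T X, since Σ^{1/2}P⊥θ* = (Σ − Σ̂)^{1/2}P⊥θ* and projections contract norms. -/

import Mathlib

open Matrix MeasureTheory

/-- Bias of the minimum-norm linear interpolant `θ̂ = X† y` when `n < d` and `X Xᵀ` is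
invertible: with `P⊥ = I - Xᵀ (X Xᵀ)⁻¹ X` the projector onto the kernel of `X`,
`Σ` the population covariance of `x` (mean zero) and `θ*` the true parameter,
`BIAS² = E_x(⟨θ*, x⟩ - ⟨E_y θ̂, x⟩)² = ‖Σ^{1/2} P⊥ θ*‖₂² = (P⊥θ*)ᵀ Σ (P⊥θ*)`, and
moreover `BIAS² ≤ ‖θ*‖₂² ⬝ ‖Σ - Σ̂‖` where `Σ̂ = (1/n) Xᵀ X` and `‖·‖` is the
`ℓ₂` operator norm. -/
theorem min_norm_interpolant_bias
    {n d : ℕ} (hnd : n < d)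
    (X : Matrix (Fin n) (Fin d) ℝ) (hX : IsUnit (X * Xᵀ).det)
    (θs : Fin d → ℝ) (S : Matrix (Fin d) (Fin d) ℝ) (hS : S.PosSemidef)
    (ν : Measure (Fin d → ℝ)) [IsProbabilityMeasure ν]
    (hint : ∀ i j, Integrable (fun x : Fin d → ℝ => x i * x j) ν)
    (hmean : ∀ i, ∫ x : Fin d → ℝ, x i ∂ν = 0)
    (hcov : ∀ i j, ∫ x : Fin d → ℝ, x i * x j ∂ν = S i j) :
    (∫ x : Fin d → ℝ,
        ((θs ⬝ᵥ x) - ((Xᵀ * (X * Xᵀ)⁻¹ * X).mulVec θs ⬝ᵥ x)) ^ 2 ∂ν)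
      = (((1 : Matrix (Fin d) (Fin d) ℝ) - Xᵀ * (X * Xᵀ)⁻¹ * X).mulVec θs) ⬝ᵥ
          (S.mulVec ((((1 : Matrix (Fin d) (Fin d) ℝ) - Xᵀ * (X * Xᵀ)⁻¹ * X)).mulVec θs)) ∧
    (∫ x : Fin d → ℝ,
        ((θs ⬝ᵥ x) - ((Xᵀ * (X * Xᵀ)⁻¹ * X).mulVec θs ⬝ᵥ x)) ^ 2 ∂ν)
      ≤ (∑ i, (θs i) ^ 2) *
          ‖Matrix.toEuclideanCLM (𝕜 := ℝ) (S - (n : ℝ)⁻¹ • (Xᵀ * X))‖ := by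
  set P : Matrix (Fin d) (Fin d) ℝ := Xᵀ * (X * Xᵀ)⁻¹ * X with hP
  set v : Fin d → ℝ := ((1 : Matrix (Fin d) (Fin d) ℝ) - P).mulVec θs with hv
  -- basic facts about P
  have hPsymm : Pᵀ = P := by
    rw [hP]
    rw [Matrix.transpose_mul, Matrix.transpose_mul, Matrix.transpose_nonsing_inv,
      Matrix.transpose_mul, Matrix.transpose_transpose, Matrix.mul_assoc]
  have hXXinv : (X * Xᵀ) * (X * Xᵀ)⁻¹ = 1 := Matrix.mul_nonsing_inv _ hX
  have hXP : X * P = X := by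
    rw [hP, ← Matrix.mul_assoc, ← Matrix.mul_assoc, hXXinv, Matrix.one_mul]
  have hPP : P * P = P := by
    have h1 : Xᵀ * (X * Xᵀ)⁻¹ * X * (Xᵀ * (X * Xᵀ)⁻¹ * X)
        = Xᵀ * (X * Xᵀ)⁻¹ * ((X * Xᵀ) * (X * Xᵀ)⁻¹) * X := by
      simp only [Matrix.mul_assoc]
    rw [hP, h1, hXXinv, Matrix.mul_one]
  -- X v = 0
  have hXv : X.mulVec v = 0 := by
    rw [hv, Matrix.mulVec_mulVec, Matrix.mul_sub, Matrix.mul_one, hXP, sub_self,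
      Matrix.zero_mulVec]
  -- part 1: compute the integral
  have key : (∫ x : Fin d → ℝ,
      ((θs ⬝ᵥ x) - (P.mulVec θs ⬝ᵥ x)) ^ 2 ∂ν) = v ⬝ᵥ S.mulVec v := by
    have hfun : ∀ x : Fin d → ℝ,
        ((θs ⬝ᵥ x) - (P.mulVec θs ⬝ᵥ x)) ^ 2 = ∑ i, ∑ j, (v i * v j) * (x i * x j) := by
      intro x
      have : (θs ⬝ᵥ x) - (P.mulVec θs ⬝ᵥ x) = v ⬝ᵥ x := by
        rw [hv, Matrix.sub_mulVec, sub_dotProduct, Matrix.one_mulVec]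
      rw [this]
      rw [sq, dotProduct, Finset.sum_mul_sum]
      exact Finset.sum_congr rfl fun i _ => Finset.sum_congr rfl fun j _ => by ring
    simp only [hfun]
    rw [integral_finset_sum _ (fun i _ => integrable_finset_sum _
      (fun j _ => ((hint i j).const_mul _)))]
    have : ∀ i, (∫ x : Fin d → ℝ, ∑ j, (v i * v j) * (x i * x j) ∂ν)
        = ∑ j, (v i * v j) * S i j := by
      intro i
      rw [integral_finset_sum _ (fun j _ => ((hint i j).const_mul _))]
      exact Finset.sum_congr rfl fun j _ => by rw [integral_const_mul, hcov]
    simp only [this]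
    rw [dotProduct]
    refine Finset.sum_congr rfl fun i _ => ?_
    rw [Matrix.mulVec, dotProduct, Finset.mul_sum]
    exact Finset.sum_congr rfl fun j _ => by ring
  refine ⟨key, ?_⟩
  rw [key]
  -- part 2
  set A : Matrix (Fin d) (Fin d) ℝ := S - (n : ℝ)⁻¹ • (Xᵀ * X) with hA
  have hSA : v ⬝ᵥ S.mulVec v = v ⬝ᵥ A.mulVec v := by
    rw [hA, Matrix.sub_mulVec, dotProduct_sub, Matrix.smul_mulVec,
      ← Matrix.mulVec_mulVec, hXv, Matrix.mulVec_zero, smul_zero,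
      dotProduct_zero, sub_zero]
  rw [hSA]
  -- norm of v vs norm of θs
  have quad : ∀ (M : Matrix (Fin d) (Fin d) ℝ) (a b : Fin d → ℝ),
      (M.mulVec a) ⬝ᵥ b = a ⬝ᵥ (Mᵀ.mulVec b) := by
    intro M a b
    rw [dotProduct_mulVec a Mᵀ b, Matrix.vecMul_transpose]
  have hsymm1 : ((1 : Matrix (Fin d) (Fin d) ℝ) - P)ᵀ = 1 - P := by
    rw [Matrix.transpose_sub, Matrix.transpose_one, hPsymm]
  have hvv : v ⬝ᵥ v ≤ ∑ i, (θs i) ^ 2 := by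
    have hvv' : v ⬝ᵥ v = θs ⬝ᵥ (((1 : Matrix (Fin d) (Fin d) ℝ) - P).mulVec θs) := by
      conv_lhs => rw [hv, quad, hsymm1, Matrix.mulVec_mulVec]
      have h11 : ((1 : Matrix (Fin d) (Fin d) ℝ) - P) * (1 - P) = 1 - P := by
        simp [Matrix.sub_mul, Matrix.mul_sub, hPP]
      rw [h11]
    have hPnn : 0 ≤ θs ⬝ᵥ P.mulVec θs := by
      have h2 : (P.mulVec θs) ⬝ᵥ (P.mulVec θs) = θs ⬝ᵥ P.mulVec θs := by
        rw [quad, hPsymm, Matrix.mulVec_mulVec, hPP]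
      rw [← h2]
      exact Finset.sum_nonneg fun i _ => mul_self_nonneg _
    have : ∑ i, (θs i) ^ 2 = θs ⬝ᵥ θs := by
      simp [dotProduct, sq]
    rw [this, hvv']
    rw [Matrix.sub_mulVec, dotProduct_sub, Matrix.one_mulVec]
    linarith
  -- quadratic form bound
  set u : EuclideanSpace ℝ (Fin d) := (WithLp.equiv 2 (Fin d → ℝ)).symm v with hu
  have hdot : v ⬝ᵥ A.mulVec v = inner ℝ u (Matrix.toEuclideanCLM (𝕜 := ℝ) A u) := by
    rw [hu]
    simp [PiLp.inner_apply, RCLike.inner_apply, dotProduct, mul_comm,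
      Matrix.toEuclideanCLM_toLp, PiLp.toLp_apply]
  have hnormu : ‖u‖ ^ 2 = v ⬝ᵥ v := by
    rw [← real_inner_self_eq_norm_sq, hu]
    simp [PiLp.inner_apply, RCLike.inner_apply, dotProduct,
      Matrix.toEuclideanCLM_toLp, PiLp.toLp_apply]
    rw [EuclideanSpace.norm_sq_eq]
    simp [sq]
  calc v ⬝ᵥ A.mulVec v = inner ℝ u (Matrix.toEuclideanCLM (𝕜 := ℝ) A u) := hdot
    _ ≤ ‖u‖ * ‖Matrix.toEuclideanCLM (𝕜 := ℝ) A u‖ := real_inner_le_norm _ _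
    _ ≤ ‖u‖ * (‖Matrix.toEuclideanCLM (𝕜 := ℝ) A‖ * ‖u‖) := by
        refine mul_le_mul_of_nonneg_left ((Matrix.toEuclideanCLM (𝕜 := ℝ) A).le_opNorm u)
          (norm_nonneg _)
    _ = ‖u‖ ^ 2 * ‖Matrix.toEuclideanCLM (𝕜 := ℝ) A‖ := by ring
    _ ≤ (∑ i, (θs i) ^ 2) * ‖Matrix.toEuclideanCLM (𝕜 := ℝ) A‖ := by
        refine mul_le_mul_of_nonneg_right ?_ (norm_nonneg _)
        rw [hnormu]; exact hvv
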